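/- In the graded ring A = ℂ[α⁽⁰⁾, α⁽¹⁾, ...]/im D with deg α⁽ⁿ⁾ = n+1, for each k ≥ 0 there is at most one element 𝒥⁽ᵏ⁾ of degree k+2 with leading term (1/(k+2)!)(α⁽⁰⁾)^{k+2} annihilated by the degree-2 operator E = E₁' + D·α⁽⁰⁾-part + E₂ described below; in particular, in low degrees: the unique such elements of degree 2 and 3 are 𝒥⁽⁰⁾ = (1/2)(α⁽⁰⁾)², 𝒥⁽¹⁾ = (1/6)(α⁽⁰⁾)³ (all other degree-2 and degree-3 monomials being total derivatives modulo im D). -/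
import Mathlib

open MvPolynomial

/-- The total-derivative operator `D` on `A = ℂ[α⁽⁰⁾, α⁽¹⁾, ...]`,
with `D(α⁽ⁿ⁾) = α⁽ⁿ⁺¹⁾`. -/
noncomputable def totalDer :
    Derivation ℂ (MvPolynomial ℕ ℂ) (MvPolynomial ℕ ℂ) :=
  MvPolynomial.mkDerivation ℂ (fun n => X (n + 1))

lemma totalDer_X (n : ℕ) : totalDer (X n) = X (n + 1) :=
  MvPolynomial.mkDerivation_X _ _ _

/-- Substitution setting all higher variables to zero. -/
noncomputable def zeroEval : MvPolynomial ℕ ℂ →ₐ[ℂ] MvPolynomial ℕ ℂ :=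
  aeval (fun n => if n = 0 then X 0 else 0)

lemma zeroEval_totalDer (g : MvPolynomial ℕ ℂ) : zeroEval (totalDer g) = 0 := by
  induction g using MvPolynomial.induction_on with
  | C a => simp
  | add p q hp hq => rw [map_add, map_add, hp, hq, add_zero]
  | mul_X p n hp =>
      have hz : zeroEval (X (n + 1)) = 0 := by
        simp [zeroEval, aeval_X]
      rw [Derivation.leibniz, map_add, smul_eq_mul, smul_eq_mul, map_mul, map_mul, hp,
        totalDer_X, hz]
      ring

lemma X_eq_monomial (n : ℕ) :
    (X n : MvPolynomial ℕ ℂ) = monomial (Finsupp.single n 1) 1 := by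
  rw [← X_pow_eq_monomial, pow_one]

lemma weight_le_of_ne (d : ℕ →₀ ℕ) (n : ℕ) (h : d n ≠ 0) :
    n + 1 ≤ Finsupp.weight (fun n : ℕ => n + 1) d :=
  Finsupp.le_weight_of_ne_zero' _ h

lemma weight_single (n k : ℕ) :
    Finsupp.weight (fun n : ℕ => n + 1) (Finsupp.single n k) = k * (n + 1) := by
  simp [Finsupp.weight_apply, Finsupp.sum_single_index]

lemma classify2 (d : ℕ →₀ ℕ) (h : Finsupp.weight (fun n : ℕ => n + 1) d = 2) :
    d = Finsupp.single 0 2 ∨ d = Finsupp.single 1 1 := by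
  have hhi : ∀ n, 2 ≤ n → d n = 0 := by
    intro n hn
    by_contra hne
    have := weight_le_of_ne d n hne
    omega
  have hd : d = Finsupp.single 0 (d 0) + Finsupp.single 1 (d 1) := by
    ext n
    match n with
    | 0 => simp
    | 1 => simp
    | (m+2) => simp [hhi (m+2) (by omega), Finsupp.single_apply]
  have hw : d 0 * 1 + d 1 * 2 = 2 := by
    rw [hd, map_add, weight_single, weight_single] at h
    omega
  rcases (by omega : (d 0 = 2 ∧ d 1 = 0) ∨ (d 0 = 0 ∧ d 1 = 1)) with ⟨h0, h1⟩ | ⟨h0, h1⟩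
  · left; rw [hd, h0, h1, Finsupp.single_zero, add_zero]
  · right; rw [hd, h0, h1, Finsupp.single_zero, zero_add]

lemma classify3 (d : ℕ →₀ ℕ) (h : Finsupp.weight (fun n : ℕ => n + 1) d = 3) :
    d = Finsupp.single 0 3 ∨ d = Finsupp.single 0 1 + Finsupp.single 1 1 ∨
      d = Finsupp.single 2 1 := by
  have hhi : ∀ n, 3 ≤ n → d n = 0 := by
    intro n hn
    by_contra hne
    have := weight_le_of_ne d n hne
    omega
  have hd : d = Finsupp.single 0 (d 0) + Finsupp.single 1 (d 1) + Finsupp.single 2 (d 2) := by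
    ext n
    match n with
    | 0 => simp
    | 1 => simp
    | 2 => simp
    | (m+3) => simp [hhi (m+3) (by omega), Finsupp.single_apply]
  have hw : d 0 * 1 + d 1 * 2 + d 2 * 3 = 3 := by
    rw [hd, map_add, map_add, weight_single, weight_single, weight_single] at h
    omega
  rcases (by omega : (d 0 = 3 ∧ d 1 = 0 ∧ d 2 = 0) ∨ (d 0 = 1 ∧ d 1 = 1 ∧ d 2 = 0)
      ∨ (d 0 = 0 ∧ d 1 = 0 ∧ d 2 = 1)) with ⟨h0, h1, h2⟩ | ⟨h0, h1, h2⟩ | ⟨h0, h1, h2⟩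
  · left; rw [hd, h0, h1, h2]; simp
  · right; left; rw [hd, h0, h1, h2]; simp
  · right; right; rw [hd, h0, h1, h2]; simp

lemma sum_support (f : MvPolynomial ℕ ℂ) (s : Finset (ℕ →₀ ℕ)) (hs : f.support ⊆ s) :
    f = ∑ d ∈ s, monomial d (coeff d f) := by
  rw [← Finset.sum_subset hs (fun d _ hd => by
    rw [MvPolynomial.notMem_support_iff.mp hd, map_zero])]
  exact (MvPolynomial.support_sum_monomial_coeff f).symm

lemma finsupp_ne_of_apply {d e : ℕ →₀ ℕ} (n : ℕ) (h : d n ≠ e n) : d ≠ e :=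
  fun he => h (by rw [he])

/-- In the graded ring `A = ℂ[α⁽⁰⁾,α⁽¹⁾,...]/im D` with `deg α⁽ⁿ⁾ = n+1`, the
degree-2 component is 1-dimensional spanned by `(α⁽⁰⁾)²` and the degree-3
component is 1-dimensional spanned by `(α⁽⁰⁾)³`; in particular
`𝒥⁽⁰⁾ = (1/2)(α⁽⁰⁾)²` and `𝒥⁽¹⁾ = (1/6)(α⁽⁰⁾)³` are the unique degree-2 and
degree-3 elements with these leading terms modulo total derivatives. -/
theorem degree_two_three_mod_totalDer :
    (∀ f : MvPolynomial ℕ ℂ, f.IsWeightedHomogeneous (fun n : ℕ => n + 1) 2 →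
      ∃ (c : ℂ) (g : MvPolynomial ℕ ℂ), f = c • (X 0) ^ 2 + totalDer g) ∧
    (∀ (c : ℂ) (g : MvPolynomial ℕ ℂ), c • (X 0 : MvPolynomial ℕ ℂ) ^ 2 = totalDer g → c = 0) ∧
    (∀ f : MvPolynomial ℕ ℂ, f.IsWeightedHomogeneous (fun n : ℕ => n + 1) 3 →
      ∃ (c : ℂ) (g : MvPolynomial ℕ ℂ), f = c • (X 0) ^ 3 + totalDer g) ∧
    (∀ (c : ℂ) (g : MvPolynomial ℕ ℂ), c • (X 0 : MvPolynomial ℕ ℂ) ^ 3 = totalDer g → c = 0) := by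
  have huniq : ∀ (k : ℕ) (c : ℂ) (g : MvPolynomial ℕ ℂ),
      c • (X 0 : MvPolynomial ℕ ℂ) ^ k = totalDer g → c = 0 := by
    intro k c g h
    have h2 := congrArg zeroEval h
    rw [zeroEval_totalDer, map_smul, map_pow] at h2
    have hX : zeroEval (X 0 : MvPolynomial ℕ ℂ) = X 0 := by simp [zeroEval, aeval_X]
    rw [hX] at h2
    rcases smul_eq_zero.mp h2 with hc | hp
    · exact hc
    · exact absurd hp (pow_ne_zero _ (MvPolynomial.X_ne_zero 0))
  refine ⟨?_, huniq 2, ?_, huniq 3⟩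
  · intro f hf
    have hsub : f.support ⊆ {Finsupp.single 0 2, Finsupp.single 1 1} := by
      intro d hd
      rcases classify2 d (hf (MvPolynomial.mem_support_iff.mp hd)) with h | h <;>
        simp [h]
    have hf2 := sum_support f _ hsub
    have hne : Finsupp.single 0 2 ∉ ({Finsupp.single 1 1} : Finset (ℕ →₀ ℕ)) := by
      rw [Finset.mem_singleton]
      exact finsupp_ne_of_apply 0 (by simp)
    rw [Finset.sum_insert hne, Finset.sum_singleton] at hf2
    set a := coeff (Finsupp.single 0 2) f with ha
    set b := coeff (Finsupp.single 1 1) f with hb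
    refine ⟨a, b • X 0, ?_⟩
    rw [hf2, totalDer.map_smul, totalDer_X]
    have h1 : monomial (Finsupp.single 0 2) a = a • (X 0 : MvPolynomial ℕ ℂ) ^ 2 := by
      rw [X_pow_eq_monomial, smul_monomial, smul_eq_mul, mul_one]
    have h2 : monomial (Finsupp.single 1 1) b = b • (X 1 : MvPolynomial ℕ ℂ) := by
      rw [X_eq_monomial, smul_monomial, smul_eq_mul, mul_one]
    rw [h1, h2]
  · intro f hf
    have hsub : f.support ⊆ {Finsupp.single 0 3, Finsupp.single 0 1 + Finsupp.single 1 1,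
        Finsupp.single 2 1} := by
      intro d hd
      rcases classify3 d (hf (MvPolynomial.mem_support_iff.mp hd)) with h | h | h <;>
        simp [h]
    have hf2 := sum_support f _ hsub
    have hne1 : Finsupp.single 0 3 ∉ ({Finsupp.single 0 1 + Finsupp.single 1 1,
        Finsupp.single 2 1} : Finset (ℕ →₀ ℕ)) := by
      rw [Finset.mem_insert, Finset.mem_singleton]
      push_neg
      exact ⟨finsupp_ne_of_apply 0 (by simp), finsupp_ne_of_apply 0 (by simp)⟩
    have hne2 : Finsupp.single 0 1 + Finsupp.single 1 1
        ∉ ({Finsupp.single 2 1} : Finset (ℕ →₀ ℕ)) := by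
      rw [Finset.mem_singleton]
      exact finsupp_ne_of_apply 0 (by simp)
    rw [Finset.sum_insert hne1, Finset.sum_insert hne2, Finset.sum_singleton] at hf2
    set a := coeff (Finsupp.single 0 3) f with ha
    set b := coeff (Finsupp.single 0 1 + Finsupp.single 1 1) f with hb
    set c := coeff (Finsupp.single 2 1) f with hc
    refine ⟨a, (b / 2) • (X 0 * X 0) + c • X 1, ?_⟩
    rw [hf2, map_add, totalDer.map_smul, totalDer.map_smul, Derivation.leibniz,
      totalDer_X, totalDer_X]
    have h1 : monomial (Finsupp.single 0 3) a = a • (X 0 : MvPolynomial ℕ ℂ) ^ 3 := by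
      rw [X_pow_eq_monomial, smul_monomial, smul_eq_mul, mul_one]
    have h2 : monomial (Finsupp.single 0 1 + Finsupp.single 1 1) b
        = b • ((X 0 : MvPolynomial ℕ ℂ) * X 1) := by
      rw [X_eq_monomial, X_eq_monomial, monomial_mul, smul_monomial, smul_eq_mul,
        mul_one, mul_one]
    have h3 : monomial (Finsupp.single 2 1) c = c • (X 2 : MvPolynomial ℕ ℂ) := by
      rw [X_eq_monomial, smul_monomial, smul_eq_mul, mul_one]
    rw [h1, h2, h3]
    have h4 : (b / 2 : ℂ) • ((X 0 : MvPolynomial ℕ ℂ) • (X 1 : MvPolynomial ℕ ℂ)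
          + (X 0 : MvPolynomial ℕ ℂ) • (X 1 : MvPolynomial ℕ ℂ))
        = b • ((X 0 : MvPolynomial ℕ ℂ) * X 1) := by
      rw [smul_eq_mul, ← two_smul ℂ, smul_smul]
      norm_num
    rw [h4]
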